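/- arXiv:2109.14087 — 3 statements merged into one kernel-verified Lean document; each statement's English description precedes it below -/
import Mathlib

section
/- The inverse Gamma density f∞(x) = (k^μ / Γ(μ)) · e^{-k/x} / x^{1+μ} on (0,∞), with μ = 1 + 2λ/σ and k = (μ-1)·m_B, is a stationary solution of the Fokker-Planck equation, i.e., it satisfies λ·d/dx[(x - m_B) f(x)] + (σ/2)·d²/dx²[x² f(x)] = 0 for all x > 0. -/
open Real Filter

/-- The inverse Gamma density is a stationary solution of the Fokker-Planck equation. -/
theorem inverse_gamma_stationary
    (lam sigma mB : ℝ) (hlam : 0 < lam) (hsigma : 0 < sigma) (hmB : 0 < mB)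
    (μ k : ℝ) (hμ : μ = 1 + 2 * lam / sigma) (hk : k = (μ - 1) * mB)
    (f : ℝ → ℝ)
    (hf : ∀ x : ℝ, f x = (k ^ μ / Real.Gamma μ) * Real.exp (-k / x) / x ^ (1 + μ)) :
    ∀ x : ℝ, 0 < x →
      lam * deriv (fun y => (y - mB) * f y) x
        + (sigma / 2) * deriv (deriv (fun y => y ^ 2 * f y)) x = 0 := by
  have hC : ∃ C : ℝ, C = k ^ μ / Real.Gamma μ := ⟨_, rfl⟩
  obtain ⟨C, hC⟩ := hC
  set g : ℝ → ℝ := fun y => Real.exp (-k / y) * y ^ (-(1 + μ)) with hgdef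
  have hfg : ∀ y : ℝ, 0 < y → f y = C * g y := by
    intro y hy
    have hr : (y:ℝ) ^ (-(1 + μ)) = (y ^ (1 + μ))⁻¹ := Real.rpow_neg hy.le _
    rw [hf, hC]
    simp only [hgdef, hr]
    ring
  have hg : ∀ x : ℝ, 0 < x →
      HasDerivAt g (g x * (k / x ^ 2 - (1 + μ) / x)) x := by
    intro x hx
    have h1 : HasDerivAt (fun y : ℝ => -k / y) (k / x ^ 2) x := by
      have h := (hasDerivAt_inv hx.ne').const_mul (-k)
      have h' : HasDerivAt (fun y : ℝ => -k / y) (-k * -(x ^ 2)⁻¹) x := by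
        simpa [div_eq_mul_inv] using h
      have : -k * -(x ^ 2)⁻¹ = k / x ^ 2 := by field_simp
      rwa [this] at h'
    have h3 : HasDerivAt (fun y : ℝ => y ^ (-(1 + μ)))
        (-(1 + μ) * x ^ (-(1 + μ) - 1)) x :=
      Real.hasDerivAt_rpow_const (Or.inl hx.ne')
    have h := h1.exp.mul h3
    refine h.congr_deriv ?_
    simp only [hgdef]
    rw [Real.rpow_sub hx, Real.rpow_one]
    field_simp
    ring
  intro x hx
  have hmem : Set.Ioi (0:ℝ) ∈ nhds x := isOpen_Ioi.mem_nhds hx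
  -- first derivative term
  have e1 : (fun y => (y - mB) * f y) =ᶠ[nhds x] (fun y => C * ((y - mB) * g y)) := by
    filter_upwards [hmem] with y hy
    rw [hfg y hy]; ring
  have H1 : HasDerivAt (fun y => C * ((y - mB) * g y))
      (C * (1 * g x + (x - mB) * (g x * (k / x ^ 2 - (1 + μ) / x)))) x :=
    (((hasDerivAt_id x).sub_const mB).mul (hg x hx)).const_mul C
  have d1 : deriv (fun y => (y - mB) * f y) x
      = C * (1 * g x + (x - mB) * (g x * (k / x ^ 2 - (1 + μ) / x))) := by
    rw [e1.deriv_eq, H1.deriv]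
  -- second derivative term
  have dstep : ∀ y : ℝ, 0 < y →
      deriv (fun z => z ^ 2 * f z) y = C * (g y * (k + (1 - μ) * y)) := by
    intro y hy
    have e2 : (fun z => z ^ 2 * f z) =ᶠ[nhds y] (fun z => C * (z ^ 2 * g z)) := by
      filter_upwards [isOpen_Ioi.mem_nhds hy] with z hz
      rw [hfg z hz]; ring
    have H2 : HasDerivAt (fun z => C * (z ^ 2 * g z))
        (C * ((↑2 * y ^ 1) * g y + y ^ 2 * (g y * (k / y ^ 2 - (1 + μ) / y)))) y :=
      ((hasDerivAt_pow 2 y).mul (hg y hy)).const_mul C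
    rw [e2.deriv_eq, H2.deriv]
    have hy' : (y:ℝ) ≠ 0 := hy.ne'
    field_simp
    ring
  have e3 : deriv (fun z => z ^ 2 * f z) =ᶠ[nhds x]
      (fun y => C * (g y * (k + (1 - μ) * y))) := by
    filter_upwards [hmem] with y hy
    exact dstep y hy
  have Hlin : HasDerivAt (fun y : ℝ => k + (1 - μ) * y) ((1 - μ) * 1) x :=
    ((hasDerivAt_id x).const_mul (1 - μ)).const_add k
  have H3 : HasDerivAt (fun y => C * (g y * (k + (1 - μ) * y)))
      (C * (g x * (k / x ^ 2 - (1 + μ) / x) * (k + (1 - μ) * x)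
        + g x * ((1 - μ) * 1))) x :=
    ((hg x hx).mul Hlin).const_mul C
  have d2 : deriv (deriv (fun z => z ^ 2 * f z)) x
      = C * (g x * (k / x ^ 2 - (1 + μ) / x) * (k + (1 - μ) * x)
        + g x * ((1 - μ) * 1)) := by
    rw [e3.deriv_eq, H3.deriv]
  rw [d1, d2]
  subst hk
  subst hμ
  have hx' : (x:ℝ) ≠ 0 := hx.ne'
  have hs : sigma ≠ 0 := hsigma.ne'
  field_simp
  ring
end

section
/- In the Chang–Cooper discretization, the weight δ_{i+1/2} = 1/λ_{i+1/2} + 1/(1 - exp(λ_{i+1/2})) satisfies δ_{i+1/2} ∈ (0,1) for every λ_{i+1/2} ≠ 0, and δ_{i+1/2} → 1/2 as λ_{i+1/2} → 0. -/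
open Filter

lemma cc_den (lam : ℝ) (hlam : lam ≠ 0) : lam * (1 - Real.exp lam) < 0 := by
  rcases lt_or_gt_of_ne hlam with hneg | hpos
  · have h1 : Real.exp lam < 1 := Real.exp_lt_one_iff.mpr hneg
    exact mul_neg_of_neg_of_pos hneg (by linarith)
  · have h1 : 1 < Real.exp lam := by nlinarith [Real.add_one_lt_exp (ne_of_gt hpos)]
    exact mul_neg_of_pos_of_neg hpos (by linarith)

lemma cc_den_ne (lam : ℝ) (hlam : lam ≠ 0) : 1 - Real.exp lam ≠ 0 := by
  have := cc_den lam hlam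
  intro h
  rw [h, mul_zero] at this
  exact lt_irrefl 0 this

lemma cc_eq (lam : ℝ) (hlam : lam ≠ 0) :
    1 / lam + 1 / (1 - Real.exp lam)
      = (1 - Real.exp lam + lam) / (lam * (1 - Real.exp lam)) := by
  have h2 := cc_den_ne lam hlam
  field_simp

lemma cc_pos (lam : ℝ) (hlam : lam ≠ 0) : 0 < 1 / lam + 1 / (1 - Real.exp lam) := by
  have hE := Real.add_one_lt_exp hlam
  rw [cc_eq lam hlam]
  exact div_pos_of_neg_of_neg (by linarith) (cc_den lam hlam)

lemma cc_lt_one (lam : ℝ) (hlam : lam ≠ 0) : 1 / lam + 1 / (1 - Real.exp lam) < 1 := by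
  have hE' := Real.add_one_lt_exp (neg_ne_zero.mpr hlam)
  have hEpos : 0 < Real.exp lam := Real.exp_pos lam
  have hprod : Real.exp (-lam) * Real.exp lam = 1 := by
    rw [← Real.exp_add]; simp
  have hnum : 0 < (1 - Real.exp lam + lam) - lam * (1 - Real.exp lam) := by
    nlinarith [mul_pos (show (0:ℝ) < Real.exp (-lam) - (1 - lam) by linarith) hEpos]
  have hden := cc_den lam hlam
  have heq2 : 1 / lam + 1 / (1 - Real.exp lam) - 1
      = ((1 - Real.exp lam + lam) - lam * (1 - Real.exp lam)) / (lam * (1 - Real.exp lam)) := by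
    have h2 := cc_den_ne lam hlam
    field_simp
  have := div_neg_of_pos_of_neg hnum hden
  linarith

/-- The Chang–Cooper weight δ(λ) = 1/λ + 1/(1 - e^λ) lies in (0,1) for λ ≠ 0 and
tends to 1/2 as λ → 0. -/
theorem chang_cooper_weight
    (δ : ℝ → ℝ) (hδ : ∀ lam, δ lam = 1 / lam + 1 / (1 - Real.exp lam)) :
    (∀ lam : ℝ, lam ≠ 0 → δ lam ∈ Set.Ioo (0:ℝ) 1) ∧
    Tendsto δ (nhdsWithin 0 {x : ℝ | x ≠ 0}) (nhds (1 / 2)) := by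
  constructor
  · intro lam hlam
    rw [hδ]
    exact ⟨cc_pos lam hlam, cc_lt_one lam hlam⟩
  · have hA : Tendsto (fun x : ℝ => (Real.exp x - 1) / x)
        (nhdsWithin 0 {x : ℝ | x ≠ 0}) (nhds 1) := by
      have h := Real.hasDerivAt_exp 0
      rw [hasDerivAt_iff_tendsto_slope, Real.exp_zero] at h
      exact Tendsto.congr (fun x => by simp [slope_def_field]) h
    have hB : Tendsto (fun x : ℝ => (Real.exp x - 1 - x) / (x ^ 2))
        (nhdsWithin 0 {x : ℝ | x ≠ 0}) (nhds (1/2)) := by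
      apply HasDerivAt.lhopital_zero_nhdsNE (f' := fun x => Real.exp x - 1)
        (g' := fun x => 2 * x)
      · filter_upwards with x
        simpa [Pi.sub_def] using ((Real.hasDerivAt_exp x).sub_const 1).sub (hasDerivAt_id' x)
      · filter_upwards with x
        simpa using (hasDerivAt_pow 2 x)
      · filter_upwards [self_mem_nhdsWithin] with x hx
        simp only [Set.mem_compl_iff, Set.mem_singleton_iff] at hx
        intro h
        rcases mul_eq_zero.mp h with h | h
        · norm_num at h
        · exact hx h
      · have : Tendsto (fun x : ℝ => Real.exp x - 1 - x) (nhds 0) (nhds 0) := by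
          have hc : Continuous (fun x : ℝ => Real.exp x - 1 - x) := by continuity
          simpa using hc.tendsto 0
        exact this.mono_left nhdsWithin_le_nhds
      · have : Tendsto (fun x : ℝ => x ^ 2) (nhds 0) (nhds 0) := by
          simpa using (continuous_pow 2).tendsto (0:ℝ)
        exact this.mono_left nhdsWithin_le_nhds
      · have : Tendsto (fun x : ℝ => ((Real.exp x - 1) / x) / 2)
            (nhdsWithin 0 {x : ℝ | x ≠ 0}) (nhds (1/2)) := hA.div_const 2
        refine this.congr (fun x => ?_)
        rw [div_div, mul_comm]
    have key : Tendsto (fun x : ℝ => ((Real.exp x - 1 - x) / x ^ 2) / ((Real.exp x - 1) / x))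
        (nhdsWithin 0 {x : ℝ | x ≠ 0}) (nhds (1/2)) := by
      simpa [Pi.div_def] using hB.div hA one_ne_zero
    refine key.congr' ?_
    filter_upwards [self_mem_nhdsWithin] with x hx
    have hx0 : x ≠ 0 := hx
    have h2 : 1 - Real.exp x ≠ 0 := cc_den_ne x hx0
    have h1 : Real.exp x - 1 ≠ 0 := by intro h; apply h2; linarith [sub_eq_zero.mp h]
    rw [hδ]
    field_simp
    ring
end

section
/- For the SEIR fake-news ODE system with α, η ∈ [0,1], β, γ, δ > 0 and nonnegative initial data with S(0)+E(0)+I(0)+R(0) = 1, the compartments remain nonnegative for all t ≥ 0: S(t), E(t), I(t), R(t) ≥ 0. -/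
open Set
lemma sq_min_hasDerivAt (a : ℝ) :
    HasDerivAt (fun x : ℝ => (min x 0) ^ 2) (2 * min a 0) a := by
  rcases lt_trichotomy a 0 with h | rfl | h
  · have heq : (fun x : ℝ => (min x 0) ^ 2) =ᶠ[nhds a] fun x => x ^ 2 := by
      filter_upwards [Iio_mem_nhds h] with x hx
      rw [min_eq_left (le_of_lt (mem_Iio.mp hx))]
    have h2 : HasDerivAt (fun x : ℝ => x ^ 2) (2 * a) a := by
      simpa using hasDerivAt_pow 2 a
    rw [min_eq_left h.le]
    exact h2.congr_of_eventuallyEq heq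
  · have h0 : min (0:ℝ) 0 = 0 := min_self 0
    rw [h0, mul_zero, hasDerivAt_iff_isLittleO]
    rw [Asymptotics.isLittleO_iff]
    intro c hc
    filter_upwards [Metric.ball_mem_nhds (0:ℝ) hc] with x hx
    have hx' : |x| < c := by simpa [Real.dist_eq] using hx
    have h1 : (min x 0) ^ 2 ≤ x ^ 2 := by
      rcases le_or_gt x 0 with hx0 | hx0
      · rw [min_eq_left hx0]
      · rw [min_eq_right hx0.le]; simpa using sq_nonneg x
    calc ‖(min x 0) ^ 2 - (min (0:ℝ) 0) ^ 2 - (x - 0) • (0:ℝ)‖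
        = (min x 0) ^ 2 := by
          simp [abs_of_nonneg (sq_nonneg (min x 0))]
      _ ≤ x ^ 2 := h1
      _ = |x| * |x| := by rw [sq, ← abs_mul_abs_self]
      _ ≤ c * ‖x - 0‖ := by
          rw [sub_zero, Real.norm_eq_abs]
          exact mul_le_mul_of_nonneg_right hx'.le (abs_nonneg x)
  · have heq : (fun x : ℝ => (min x 0) ^ 2) =ᶠ[nhds a] fun _ => (0:ℝ) := by
      filter_upwards [Ioi_mem_nhds h] with x hx
      rw [min_eq_right (le_of_lt (mem_Ioi.mp hx))]
      simp
    rw [min_eq_right h.le, mul_zero]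
    exact (hasDerivAt_const a ((0:ℝ) ^ 2)).congr_of_eventuallyEq (by simpa using heq)
set_option maxHeartbeats 1000000 in
lemma seir_key (β γ δ α η C s e i : ℝ) (hβ : 0 < β) (hγ : 0 < γ) (hδ : 0 < δ)
    (hα0 : 0 ≤ α) (hα1 : α ≤ 1) (hη0 : 0 ≤ η) (hη1 : η ≤ 1)
    (hs : |s| ≤ C) (he : |e| ≤ C) (hi : |i| ≤ C) :
    2 * min s 0 * (-β * s * i + (1 - α) * γ * i)
      + 2 * min e 0 * (β * s * i - δ * e)
      + 2 * min i 0 * ((1 - η) * δ * e - γ * i)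
      ≤ (4 * β * C + 2 * γ + 2 * δ) *
        ((min s 0) ^ 2 + (min e 0) ^ 2 + (min i 0) ^ 2) := by
  have hC : 0 ≤ C := le_trans (abs_nonneg s) hs
  obtain ⟨hs1, hs2⟩ := abs_le.mp hs
  obtain ⟨he1, he2⟩ := abs_le.mp he
  obtain ⟨hi1, hi2⟩ := abs_le.mp hi
  have hβC : 0 ≤ β * C := mul_nonneg hβ.le hC
  rcases le_or_gt s 0 with hs0 | hs0 <;> rcases le_or_gt e 0 with he0 | he0 <;>
    rcases le_or_gt i 0 with hi0 | hi0
  · rw [min_eq_left hs0, min_eq_left he0, min_eq_left hi0]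
    nlinarith [mul_nonneg (mul_nonneg hβ.le (sq_nonneg s)) (by linarith : (0:ℝ) ≤ C + i),
      mul_nonneg (mul_nonneg hγ.le hα0) (mul_nonneg (neg_nonneg.2 hs0) (neg_nonneg.2 hi0)),
      mul_nonneg hγ.le (sq_nonneg (s - i)),
      mul_nonneg hβ.le (mul_nonneg (neg_nonneg.2 he0) (mul_nonneg (neg_nonneg.2 hs0) (neg_nonneg.2 hi0))),
      mul_nonneg (mul_nonneg hδ.le hη0) (mul_nonneg (neg_nonneg.2 hi0) (neg_nonneg.2 he0)),
      mul_nonneg hδ.le (sq_nonneg (i - e)),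
      mul_nonneg hβC (sq_nonneg s), mul_nonneg hβC (sq_nonneg e), mul_nonneg hβC (sq_nonneg i),
      mul_nonneg hγ.le (sq_nonneg e), mul_nonneg hδ.le (sq_nonneg s),
      mul_nonneg hγ.le (sq_nonneg i), mul_nonneg hδ.le (sq_nonneg e)]
  · rw [min_eq_left hs0, min_eq_left he0, min_eq_right hi0.le]
    nlinarith [mul_nonneg (mul_nonneg hβ.le (sq_nonneg s)) hi0.le,
      mul_nonneg (mul_nonneg hγ.le (by linarith : (0:ℝ) ≤ 1 - α)) (mul_nonneg (neg_nonneg.2 hs0) hi0.le),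
      mul_nonneg hβ.le (mul_nonneg (by linarith : (0:ℝ) ≤ C - i) (mul_nonneg (neg_nonneg.2 he0) (neg_nonneg.2 hs0))),
      mul_nonneg hβC (sq_nonneg (e - s)),
      mul_nonneg hβC (sq_nonneg s), mul_nonneg hβC (sq_nonneg e),
      mul_nonneg hγ.le (sq_nonneg s), mul_nonneg hγ.le (sq_nonneg e),
      mul_nonneg hδ.le (sq_nonneg s), mul_nonneg hδ.le (sq_nonneg e)]
  · rw [min_eq_left hs0, min_eq_right he0.le, min_eq_left hi0]
    nlinarith [mul_nonneg (mul_nonneg hβ.le (sq_nonneg s)) (by linarith : (0:ℝ) ≤ C + i),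
      mul_nonneg (mul_nonneg hγ.le hα0) (mul_nonneg (neg_nonneg.2 hs0) (neg_nonneg.2 hi0)),
      mul_nonneg hγ.le (sq_nonneg (s - i)),
      mul_nonneg (mul_nonneg hδ.le (by linarith : (0:ℝ) ≤ 1 - η)) (mul_nonneg (neg_nonneg.2 hi0) he0.le),
      mul_nonneg hβC (sq_nonneg s), mul_nonneg hβC (sq_nonneg i),
      mul_nonneg hγ.le (sq_nonneg s), mul_nonneg hγ.le (sq_nonneg i),
      mul_nonneg hδ.le (sq_nonneg s), mul_nonneg hδ.le (sq_nonneg i)]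
  · rw [min_eq_left hs0, min_eq_right he0.le, min_eq_right hi0.le]
    nlinarith [mul_nonneg (mul_nonneg hβ.le (sq_nonneg s)) hi0.le,
      mul_nonneg (mul_nonneg hγ.le (by linarith : (0:ℝ) ≤ 1 - α)) (mul_nonneg (neg_nonneg.2 hs0) hi0.le),
      mul_nonneg hβC (sq_nonneg s), mul_nonneg hγ.le (sq_nonneg s), mul_nonneg hδ.le (sq_nonneg s)]
  · rw [min_eq_right hs0.le, min_eq_left he0, min_eq_left hi0]
    nlinarith [mul_nonneg hβ.le (mul_nonneg (by linarith : (0:ℝ) ≤ C - s) (mul_nonneg (neg_nonneg.2 he0) (neg_nonneg.2 hi0))),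
      mul_nonneg hβC (sq_nonneg (e - i)),
      mul_nonneg (mul_nonneg hδ.le hη0) (mul_nonneg (neg_nonneg.2 hi0) (neg_nonneg.2 he0)),
      mul_nonneg hδ.le (sq_nonneg (i - e)),
      mul_nonneg hβC (sq_nonneg e), mul_nonneg hβC (sq_nonneg i),
      mul_nonneg hγ.le (sq_nonneg e), mul_nonneg hγ.le (sq_nonneg i),
      mul_nonneg hδ.le (sq_nonneg e), mul_nonneg hδ.le (sq_nonneg i)]
  · rw [min_eq_right hs0.le, min_eq_left he0, min_eq_right hi0.le]
    nlinarith [mul_nonneg hβ.le (mul_nonneg (neg_nonneg.2 he0) (mul_nonneg hs0.le hi0.le)),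
      mul_nonneg hβC (sq_nonneg e), mul_nonneg hγ.le (sq_nonneg e), mul_nonneg hδ.le (sq_nonneg e)]
  · rw [min_eq_right hs0.le, min_eq_right he0.le, min_eq_left hi0]
    nlinarith [mul_nonneg (mul_nonneg hδ.le (by linarith : (0:ℝ) ≤ 1 - η)) (mul_nonneg (neg_nonneg.2 hi0) he0.le),
      mul_nonneg hβC (sq_nonneg i), mul_nonneg hγ.le (sq_nonneg i), mul_nonneg hδ.le (sq_nonneg i)]
  · rw [min_eq_right hs0.le, min_eq_right he0.le, min_eq_right hi0.le]
    nlinarith [mul_nonneg hβC hC]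

set_option maxHeartbeats 1000000 in
/-- Nonnegativity of all compartments of the SEIR fake-news system for all t ≥ 0. -/
theorem seir_nonneg
    (S E I R : ℝ → ℝ) (β γ δ α η : ℝ)
    (hβ : 0 < β) (hγ : 0 < γ) (hδ : 0 < δ)
    (hα : α ∈ Set.Icc (0:ℝ) 1) (hη : η ∈ Set.Icc (0:ℝ) 1)
    (hS : ∀ t, HasDerivAt S (-β * S t * I t + (1 - α) * γ * I t) t)
    (hE : ∀ t, HasDerivAt E (β * S t * I t - δ * E t) t)
    (hI : ∀ t, HasDerivAt I ((1 - η) * δ * E t - γ * I t) t)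
    (hR : ∀ t, HasDerivAt R (η * δ * E t + α * γ * I t) t)
    (hS0 : 0 ≤ S 0) (hE0 : 0 ≤ E 0) (hI0 : 0 ≤ I 0) (hR0 : 0 ≤ R 0)
    (hsum : S 0 + E 0 + I 0 + R 0 = 1) :
    ∀ t : ℝ, 0 ≤ t → 0 ≤ S t ∧ 0 ≤ E t ∧ 0 ≤ I t ∧ 0 ≤ R t := by
  obtain ⟨hα0, hα1⟩ := hα
  obtain ⟨hη0, hη1⟩ := hη
  have cS : Continuous S := continuous_iff_continuousAt.2 fun t => (hS t).continuousAt
  have cE : Continuous E := continuous_iff_continuousAt.2 fun t => (hE t).continuousAt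
  have cI : Continuous I := continuous_iff_continuousAt.2 fun t => (hI t).continuousAt
  have cR : Continuous R := continuous_iff_continuousAt.2 fun t => (hR t).continuousAt
  have main : ∀ t : ℝ, 0 ≤ t → 0 ≤ S t ∧ 0 ≤ E t ∧ 0 ≤ I t := by
    intro T hT
    obtain ⟨x₀, -, hmax⟩ := isCompact_Icc.exists_isMaxOn (nonempty_Icc.2 hT)
      ((cS.abs.add (cE.abs.add cI.abs)).continuousOn :
        ContinuousOn (fun x => |S x| + (|E x| + |I x|)) (Icc 0 T))
    set C : ℝ := |S x₀| + (|E x₀| + |I x₀|) with hCdef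
    have hbound : ∀ x ∈ Icc (0:ℝ) T, |S x| ≤ C ∧ |E x| ≤ C ∧ |I x| ≤ C := by
      intro x hx
      have h : |S x| + (|E x| + |I x|) ≤ C := hmax hx
      refine ⟨?_, ?_, ?_⟩ <;>
        linarith [abs_nonneg (S x), abs_nonneg (E x), abs_nonneg (I x)]
    have hφd : ∀ t, HasDerivAt
        (fun t => (min (S t) 0) ^ 2 + (min (E t) 0) ^ 2 + (min (I t) 0) ^ 2)
        (2 * min (S t) 0 * (-β * S t * I t + (1 - α) * γ * I t)
          + 2 * min (E t) 0 * (β * S t * I t - δ * E t)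
          + 2 * min (I t) 0 * ((1 - η) * δ * E t - γ * I t)) t := by
      intro t
      have h1 := (sq_min_hasDerivAt (S t)).comp t (hS t)
      have h2 := (sq_min_hasDerivAt (E t)).comp t (hE t)
      have h3 := (sq_min_hasDerivAt (I t)).comp t (hI t)
      simpa [Function.comp_def, Pi.add_def] using (h1.add h2).add h3
    have hφcont : ContinuousOn
        (fun t => (min (S t) 0) ^ 2 + (min (E t) 0) ^ 2 + (min (I t) 0) ^ 2) (Icc 0 T) :=
      (continuous_iff_continuousAt.2 fun t => (hφd t).continuousAt).continuousOn
    have hgron := le_gronwallBound_of_liminf_deriv_right_le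
      (f := fun t => (min (S t) 0) ^ 2 + (min (E t) 0) ^ 2 + (min (I t) 0) ^ 2)
      (f' := fun t => 2 * min (S t) 0 * (-β * S t * I t + (1 - α) * γ * I t)
          + 2 * min (E t) 0 * (β * S t * I t - δ * E t)
          + 2 * min (I t) 0 * ((1 - η) * δ * E t - γ * I t))
      (δ := 0) (K := 4 * β * C + 2 * γ + 2 * δ) (ε := 0) (a := 0) (b := T) hφcont
      (fun x _ r hr => by
        simpa [slope_def_field, div_eq_inv_mul] using
          (hφd x).hasDerivWithinAt.liminf_right_slope_le hr)
      (by simp [min_eq_right hS0, min_eq_right hE0, min_eq_right hI0])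
      (fun x hx => by
        obtain ⟨h1, h2, h3⟩ := hbound x (Ico_subset_Icc_self hx)
        rw [add_zero]
        exact seir_key β γ δ α η C (S x) (E x) (I x) hβ hγ hδ hα0 hα1 hη0 hη1 h1 h2 h3)
    have hφT : (min (S T) 0) ^ 2 + (min (E T) 0) ^ 2 + (min (I T) 0) ^ 2 ≤ 0 := by
      have := hgron T (right_mem_Icc.2 hT)
      rwa [sub_zero, gronwallBound_ε0_δ0] at this
    have q1 := sq_nonneg (min (S T) 0)
    have q2 := sq_nonneg (min (E T) 0)
    have q3 := sq_nonneg (min (I T) 0)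
    have hs : min (S T) 0 = 0 :=
      pow_eq_zero_iff two_ne_zero |>.mp (by nlinarith)
    have he : min (E T) 0 = 0 :=
      pow_eq_zero_iff two_ne_zero |>.mp (by nlinarith)
    have hi : min (I T) 0 = 0 :=
      pow_eq_zero_iff two_ne_zero |>.mp (by nlinarith)
    exact ⟨min_eq_right_iff.mp hs, min_eq_right_iff.mp he, min_eq_right_iff.mp hi⟩
  intro t ht
  obtain ⟨hSt, hEt, hIt⟩ := main t ht
  refine ⟨hSt, hEt, hIt, ?_⟩
  have hmono : MonotoneOn R (Icc 0 t) := by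
    apply monotoneOn_of_deriv_nonneg (convex_Icc 0 t) cR.continuousOn
    · intro x _
      exact (hR x).differentiableAt.differentiableWithinAt
    · intro x hx
      rw [(hR x).deriv]
      rw [interior_Icc] at hx
      obtain ⟨hE', hI'⟩ := (main x hx.1.le).2
      have := (main x hx.1.le).1
      have h1 : 0 ≤ η * δ * E x := by positivity
      have h2 : 0 ≤ α * γ * I x := by positivity
      linarith
  calc (0:ℝ) ≤ R 0 := hR0
    _ ≤ R t := hmono (left_mem_Icc.2 ht) (right_mem_Icc.2 ht) ht
end
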